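/- Let v_1,…,v_n be nonzero vectors in ℝ^d and m an odd positive integer. If Σ_j Σ_k ⟨v_j,v_k⟩^m = 0, then for every odd ℓ with 1 ≤ ℓ ≤ m, Σ_j Σ_k ‖v_j‖^{m−ℓ} ‖v_k‖^{m−ℓ} ⟨v_j,v_k⟩^ℓ = 0. -/

import Mathlib

open Finset

lemma my_inner_eq_sum {d : ℕ} (x y : EuclideanSpace ℝ (Fin d)) :
    (inner ℝ x y : ℝ) = ∑ i, x i * y i := by
  simp [PiLp.inner_apply, RCLike.inner_apply, mul_comm]

lemma my_sumsq {d n : ℕ} (v : Fin n → EuclideanSpace ℝ (Fin d)) (w : Fin n → ℝ)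
    (ι : Type) [Fintype ι] [DecidableEq ι] :
    ∑ i : ι → Fin d, (∑ j, w j * ∏ a, v j (i a)) ^ 2
      = ∑ j, ∑ k, w j * w k * (inner ℝ (v j) (v k) : ℝ) ^ (Fintype.card ι) := by
  have expand : ∀ i : ι → Fin d,
      (∑ j, w j * ∏ a, v j (i a)) ^ 2
        = ∑ j, ∑ k, w j * w k * ∏ a, (v j (i a) * v k (i a)) := by
    intro i
    rw [sq, Finset.sum_mul_sum]
    refine Finset.sum_congr rfl fun j _ => Finset.sum_congr rfl fun k _ => ?_
    rw [Finset.prod_mul_distrib]; ring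
  rw [Finset.sum_congr rfl fun i _ => expand i, Finset.sum_comm]
  refine Finset.sum_congr rfl fun j _ => ?_
  rw [Finset.sum_comm]
  refine Finset.sum_congr rfl fun k _ => ?_
  rw [← Finset.mul_sum]
  congr 1
  rw [← Fintype.prod_sum (fun (_ : ι) (x : Fin d) => v j x * v k x)]
  rw [my_inner_eq_sum]
  simp [Finset.prod_const]



/-- If nonzero vectors `v_j` in `ℝ^d` satisfy `Σ Σ ⟨v_j,v_k⟩^m = 0` for an odd `m`,
then for every odd `ℓ ≤ m`,
`Σ Σ ‖v_j‖^{m−ℓ} ‖v_k‖^{m−ℓ} ⟨v_j,v_k⟩^ℓ = 0`. -/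
theorem odd_half_design_descends (d n m : ℕ) (hm : Odd m) (hm1 : 1 ≤ m)
    (v : Fin n → EuclideanSpace ℝ (Fin d)) (hv : ∀ j, v j ≠ 0)
    (h : ∑ j, ∑ k, (inner ℝ (v j) (v k) : ℝ) ^ m = 0) :
    ∀ l : ℕ, Odd l → 1 ≤ l → l ≤ m →
      ∑ j, ∑ k, ‖v j‖ ^ (m - l) * ‖v k‖ ^ (m - l) *
        (inner ℝ (v j) (v k) : ℝ) ^ l = 0 := by
  intro l hl hl1 hlm
  -- step 1: every order-m moment tensor entry vanishes
  have hsq : ∑ i : Fin m → Fin d, (∑ j, (1 : ℝ) * ∏ a, v j (i a)) ^ 2 = 0 := by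
    rw [my_sumsq]
    simpa using h
  have h0 : ∀ i : Fin m → Fin d, (∑ j, ∏ a, v j (i a)) = 0 := by
    intro i
    have := (Finset.sum_eq_zero_iff_of_nonneg
      (fun i _ => sq_nonneg (∑ j, (1:ℝ) * ∏ a, v j (i a)))).mp hsq i (Finset.mem_univ i)
    have h2 : (∑ j, (1:ℝ) * ∏ a, v j (i a)) = 0 := by
      exact pow_eq_zero_iff (two_ne_zero) |>.mp this
    simpa using h2
  -- arithmetic: m = l + 2r
  obtain ⟨r, hr⟩ : ∃ r, m = l + 2 * r := by
    obtain ⟨a, ha⟩ := hm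
    obtain ⟨b, hb⟩ := hl
    refine ⟨a - b, ?_⟩
    omega
  -- step 2: contracted tensor vanishes
  have h1 : ∀ i : Fin l → Fin d,
      (∑ j, ‖v j‖ ^ (m - l) * ∏ a, v j (i a)) = 0 := by
    intro i
    classical
    -- the index type of size m
    set ι := Fin l ⊕ (Fin r × Bool) with hι
    have e : ι ≃ Fin m := by
      apply Fintype.equivOfCardEq
      simp [hι, hr]; ring
    have hT : ∀ ii : ι → Fin d, (∑ j, ∏ a : ι, v j (ii a)) = 0 := by
      intro ii
      have := h0 (fun b => ii (e.symm b))
      rw [← this]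
      refine Finset.sum_congr rfl fun j _ => ?_
      exact (Fintype.prod_equiv e (fun a => v j (ii a))
        (fun b => v j (ii (e.symm b))) (fun a => by show v j (ii a) = v j (ii (e.symm (e a))); rw [e.symm_apply_apply]))
    have key : (0 : ℝ) = ∑ p : Fin r → Fin d,
        ∑ j, ∏ a : ι, v j ((Sum.elim i (fun q => p q.1)) a) := by
      symm
      exact Finset.sum_eq_zero fun p _ => hT _
    rw [Finset.sum_comm] at key
    have main : ∀ j : Fin n, ‖v j‖ ^ (m - l) * ∏ a, v j (i a)
        = ∑ p : Fin r → Fin d, ∏ a : ι, v j ((Sum.elim i (fun q => p q.1)) a) := by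
      intro j
      have prodsplit : ∀ p : Fin r → Fin d,
          ∏ a : ι, v j ((Sum.elim i (fun q => p q.1)) a)
            = (∏ a, v j (i a)) * ∏ b : Fin r, (v j (p b))^2 := by
        intro p
        rw [Fintype.prod_sum_type]
        congr 1
        rw [Fintype.prod_prod_type]
        exact Finset.prod_congr rfl fun b _ => by simp [sq]
      rw [Finset.sum_congr rfl fun p _ => prodsplit p, ← Finset.mul_sum,
        ← Fintype.prod_sum (fun (_ : Fin r) (x : Fin d) => (v j x)^2)]
      have hnorm : ∑ x, (v j x)^2 = ‖v j‖^2 := by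
        rw [← real_inner_self_eq_norm_sq, my_inner_eq_sum]
        simp [sq]
      rw [Finset.prod_const, Finset.card_univ, Fintype.card_fin, hnorm,
        ← pow_mul]
      have : m - l = 2 * r := by omega
      rw [this]; ring
    rw [Finset.sum_congr rfl fun j _ => main j]
    exact key.symm
  -- step 3: conclude
  have := my_sumsq v (fun j => ‖v j‖ ^ (m - l)) (Fin l)
  simp only [Fintype.card_fin] at this
  rw [← this]
  exact Finset.sum_eq_zero fun i _ => by rw [h1 i]; ring
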